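/- Let f : F_2^k → S be a function, t ≥ 1, and let x₁, …, x_M be M distinct vectors in F_2^k. Then r^f_ID(k, t) ≥ N^(1)_ID(I_f^(1)(t, x₁, …, x_M)). -/
import Mathlib


/-- Length of a longest common subsequence of two binary words. -/
noncomputable def lcsLen (x y : List Bool) : ℕ :=
  sSup {n | ∃ z : List Bool, z.length = n ∧ z.Sublist x ∧ z.Sublist y}

/-- The insdel distance `d_ID(x,y) = |x| + |y| - 2·LCS(x,y)`. -/
noncomputable def dID (x y : List Bool) : ℕ :=
  x.length + y.length - 2 * lcsLen x y

/-- Number of runs (maximal blocks of consecutive equal symbols) of a binary word. -/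
def runs (x : List Bool) : ℕ := (x.destutter (· ≠ ·)).length

/-- Maximum run length of a binary word: the largest `n` such that some constant
word of length `n` occurs as a block of consecutive symbols of `x`. -/
noncomputable def maxRun (x : List Bool) : ℕ :=
  sSup {n | ∃ b : Bool, (List.replicate n b).IsInfix x}

/-- `D_t(x)`: the words of length `|x| - t` that are subsequences of `x`. -/
def Dset (t : ℕ) (x : List Bool) : Set (List Bool) :=
  {z | z.length = x.length - t ∧ z.Sublist x}

/-- `I_t(x)`: the words of length `|x| + t` that are supersequences of `x`. -/
def Iset (t : ℕ) (x : List Bool) : Set (List Bool) :=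
  {z | z.length = x.length + t ∧ x.Sublist z}

/-- A systematic encoding `x ↦ (x, p(x))` with redundancy words `p x` of length `r`
is a function-correcting insdel code for `f` correcting `t` insdel errors. -/
noncomputable def IsFCIDC {k : ℕ} {S : Type*} (f : (Fin k → Bool) → S) (t r : ℕ)
    (p : (Fin k → Bool) → List Bool) : Prop :=
  (∀ x, (p x).length = r) ∧
  ∀ x y, f x ≠ f y → 2 * t < dID (List.ofFn x ++ p x) (List.ofFn y ++ p y)

/-- The optimal redundancy `r^f_ID(k,t)`. -/
noncomputable def optRed {k : ℕ} {S : Type*} (f : (Fin k → Bool) → S) (t : ℕ) : ℕ :=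
  sInf {r | ∃ p, IsFCIDC f t r p}

/-- `p` is an irregular insdel-distance code of length `r` for the matrix `I`. -/
noncomputable def IsIrregularCode {M : ℕ} (I : Fin M → Fin M → ℕ) (r : ℕ)
    (p : Fin M → List Bool) : Prop :=
  (∀ i, (p i).length = r) ∧ ∀ i j, I i j ≤ dID (p i) (p j)

/-- `N^(1)_ID(I)`: least length of an irregular insdel-distance code for `I`. -/
noncomputable def N1 {M : ℕ} (I : Fin M → Fin M → ℕ) : ℕ :=
  sInf {r | ∃ p, IsIrregularCode I r p}

/-- `N^(2)_ID(I; K)`: least length `r ≥ K` of an irregular insdel-distance code for `I`. -/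
noncomputable def N2 {M : ℕ} (I : Fin M → Fin M → ℕ) (K : ℕ) : ℕ :=
  sInf {r | K ≤ r ∧ ∃ p, IsIrregularCode I r p}

-- The insdel distance matrix `I_f^(1)(t, x₁, …, x_M)`.
open Classical in
noncomputable def Imat1 {k M : ℕ} {S : Type*} (f : (Fin k → Bool) → S) (t : ℕ)
    (x : Fin M → Fin k → Bool) : Fin M → Fin M → ℕ :=
  fun i j => if f (x i) ≠ f (x j) then
    2 * t + 2 - dID (List.ofFn (x i)) (List.ofFn (x j)) else 0

-- The insdel distance matrix `I_f^(2)(t, x₁, …, x_M)`.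
open Classical in
noncomputable def Imat2 {k M : ℕ} {S : Type*} (f : (Fin k → Bool) → S) (t : ℕ)
    (x : Fin M → Fin k → Bool) : Fin M → Fin M → ℕ :=
  fun i j => if f (x i) ≠ f (x j) then
    2 * t + 2 + 2 * k - dID (List.ofFn (x i)) (List.ofFn (x j)) else 0

/-- The function distance `d^f_ID(a,b)`. -/
noncomputable def dfID {k : ℕ} {S : Type*} (f : (Fin k → Bool) → S) (a b : S) : ℕ :=
  sInf {d | ∃ x y : Fin k → Bool, f x = a ∧ f y = b ∧ dID (List.ofFn x) (List.ofFn y) = d}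

/-- The function distance matrix `I_f^(2)(t, f₁, …, f_E)`, with entries
`max(2(t+1+k) − d^f_ID(f_i, f_j), 0)` off the diagonal and `0` on the diagonal. -/
noncomputable def funMat2 {k E : ℕ} {S : Type*} (f : (Fin k → Bool) → S) (t : ℕ)
    (fs : Fin E → S) : Fin E → Fin E → ℕ :=
  fun i j => if i = j then 0 else 2 * (t + 1 + k) - dfID f (fs i) (fs j)

/-- The uniform `M × M` matrix with off-diagonal entries `d` and zero diagonal. -/
def uniMat (M d : ℕ) : Fin M → Fin M → ℕ := fun i j => if i = j then 0 else d

/-- The number-of-runs function on `F_2^k`. -/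
def runsFn (k : ℕ) (x : Fin k → Bool) : ℕ := runs (List.ofFn x)

/-- The VT-syndrome function `f(x) = Σ_{j=1}^k j·x_j mod (k+1)`. -/
def vtFn (k : ℕ) (x : Fin k → Bool) : ℕ :=
  (∑ j : Fin k, ((j : ℕ) + 1) * (if x j then 1 else 0)) % (k + 1)

/-- The function ball `B^f_ID(u, ρ) = f(B_ID(u, ρ))`. -/
def fball {k : ℕ} {S : Type*} (f : (Fin k → Bool) → S) (u : Fin k → Bool) (ρ : ℕ) : Set S :=
  f '' {v : Fin k → Bool | dID (List.ofFn u) (List.ofFn v) ≤ ρ}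

/-- `V_ID(r, d)`: the maximum size of an insdel ball of (integer) radius `d`
among centers in `F_2^r`. -/
noncomputable def Vid (r : ℕ) (d : ℤ) : ℕ :=
  sSup (Set.range fun x : Fin r → Bool =>
    Nat.card {y : Fin r → Bool | (dID (List.ofFn x) (List.ofFn y) : ℤ) ≤ d})


section Aux

open List

private lemma lcs_nonempty (x y : List Bool) :
    {n | ∃ z : List Bool, z.length = n ∧ z.Sublist x ∧ z.Sublist y}.Nonempty :=
  ⟨0, [], rfl, List.nil_sublist _, List.nil_sublist _⟩

private lemma lcs_bdd (x y : List Bool) :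
    BddAbove {n | ∃ z : List Bool, z.length = n ∧ z.Sublist x ∧ z.Sublist y} := by
  refine ⟨x.length, ?_⟩
  rintro n ⟨z, rfl, hzx, _⟩
  exact hzx.length_le

private lemma le_lcsLen {x y z : List Bool} (hzx : z.Sublist x) (hzy : z.Sublist y) :
    z.length ≤ lcsLen x y :=
  le_csSup (lcs_bdd x y) ⟨z, rfl, hzx, hzy⟩

private lemma lcsLen_exists (x y : List Bool) :
    ∃ z : List Bool, z.length = lcsLen x y ∧ z.Sublist x ∧ z.Sublist y :=
  Nat.sSup_mem (lcs_nonempty x y) (lcs_bdd x y)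

private lemma lcsLen_le_left (x y : List Bool) : lcsLen x y ≤ x.length := by
  obtain ⟨z, hz, hzx, _⟩ := lcsLen_exists x y
  exact hz ▸ hzx.length_le

private lemma lcsLen_le_right (x y : List Bool) : lcsLen x y ≤ y.length := by
  obtain ⟨z, hz, _, hzy⟩ := lcsLen_exists x y
  exact hz ▸ hzy.length_le

/-- Subadditivity: `dID(a++b, c++d) ≤ dID(a,c) + dID(b,d)`. -/
private lemma dID_append_le (a b c d : List Bool) :
    dID (a ++ b) (c ++ d) ≤ dID a c + dID b d := by
  obtain ⟨z1, hz1, hz1a, hz1c⟩ := lcsLen_exists a c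
  obtain ⟨z2, hz2, hz2b, hz2d⟩ := lcsLen_exists b d
  have hbig : lcsLen a c + lcsLen b d ≤ lcsLen (a ++ b) (c ++ d) := by
    have := le_lcsLen (hz1a.append hz2b) (hz1c.append hz2d)
    simpa [List.length_append, hz1, hz2] using this
  have h1 := lcsLen_le_left a c
  have h2 := lcsLen_le_right a c
  have h3 := lcsLen_le_left b d
  have h4 := lcsLen_le_right b d
  simp only [dID, List.length_append]
  omega

private lemma lcsLen_append_le {a c : List Bool} (b d : List Bool)
    (hac : a.length = c.length) :
    lcsLen (a ++ b) (c ++ d) ≤ a.length + lcsLen b d := by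
  refine csSup_le (lcs_nonempty _ _) ?_
  rintro n ⟨z, rfl, hz1, hz2⟩
  rw [List.sublist_append_iff] at hz1 hz2
  obtain ⟨z1, z2, hzeq, hz1a, hz2b⟩ := hz1
  obtain ⟨w1, w2, hweq, hw1c, hw2d⟩ := hz2
  have heq : z1 ++ z2 = w1 ++ w2 := by rw [← hzeq, ← hweq]
  rcases List.append_eq_append_iff.mp heq with ⟨u, hw1, hz2'⟩ | ⟨u, hz1', hw2⟩
  · -- w1 = z1 ++ u, z2 = u ++ w2
    have hsub : w2.Sublist z2 := hz2' ▸ List.sublist_append_right u w2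
    have hL := le_lcsLen (hsub.trans hz2b) hw2d
    have hlen : z.length = w1.length + w2.length := by
      rw [hweq, List.length_append]
    have := hw1c.length_le
    omega
  · -- z1 = w1 ++ u, w2 = u ++ z2
    have hsub : z2.Sublist w2 := hw2 ▸ List.sublist_append_right u z2
    have hL := le_lcsLen hz2b (hsub.trans hw2d)
    have hlen : z.length = z1.length + z2.length := by
      rw [hzeq, List.length_append]
    have := hz1a.length_le
    omega

/-- If the prefixes have equal length, appending can only increase insdel distance. -/
private lemma dID_le_dID_append {a c : List Bool} (b d : List Bool)
    (hac : a.length = c.length) :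
    dID b d ≤ dID (a ++ b) (c ++ d) := by
  have h1 := lcsLen_append_le b d hac
  have h2 := lcsLen_le_left b d
  have h3 := lcsLen_le_right b d
  simp only [dID, List.length_append]
  omega

private lemma length_eq_count (z : List Bool) :
    z.length = z.count true + z.count false := by
  induction z with
  | nil => simp
  | cons h t ih =>
    simp only [List.length_cons, List.count_cons, ih]
    cases h <;> simp <;> omega

private lemma lcs_rep_le (a b c d : ℕ) :
    lcsLen (List.replicate a true ++ List.replicate b false)
      (List.replicate c true ++ List.replicate d false) ≤ min a c + min b d := by
  refine csSup_le (lcs_nonempty _ _) ?_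
  rintro n ⟨z, rfl, hz1, hz2⟩
  have ht1 : z.count true ≤ a := by
    have := hz1.count_le true
    simpa [List.count_append, List.count_replicate] using this
  have ht2 : z.count true ≤ c := by
    have := hz2.count_le true
    simpa [List.count_append, List.count_replicate] using this
  have hf1 : z.count false ≤ b := by
    have := hz1.count_le false
    simpa [List.count_append, List.count_replicate] using this
  have hf2 : z.count false ≤ d := by
    have := hz2.count_le false
    simpa [List.count_append, List.count_replicate] using this
  have := length_eq_count z
  omega

private lemma dID_rep_ge (u N n m : ℕ) (hn : n ≤ N) (hm : m ≤ N) (hnm : n ≠ m) :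
    2 * u ≤ dID (List.replicate (u * n) true ++ List.replicate (u * (N - n)) false)
      (List.replicate (u * m) true ++ List.replicate (u * (N - m)) false) := by
  have hlcs := lcs_rep_le (u * n) (u * (N - n)) (u * m) (u * (N - m))
  have hsum1 : u * n + u * (N - n) = u * N := by rw [← Nat.mul_add]; congr 1; omega
  have hsum2 : u * m + u * (N - m) = u * N := by rw [← Nat.mul_add]; congr 1; omega
  simp only [dID, List.length_append, List.length_replicate]
  rcases Nat.lt_or_ge n m with h | h
  · have h1 : u * n + u ≤ u * m := by
      calc u * n + u = u * (n + 1) := by ring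
      _ ≤ u * m := Nat.mul_le_mul_left u h
    have h2 : u * (N - m) + u ≤ u * (N - n) := by
      calc u * (N - m) + u = u * (N - m + 1) := by ring
      _ ≤ u * (N - n) := Nat.mul_le_mul_left u (by omega)
    omega
  · have h' : m < n := by omega
    have h1 : u * m + u ≤ u * n := by
      calc u * m + u = u * (m + 1) := by ring
      _ ≤ u * n := Nat.mul_le_mul_left u h'
    have h2 : u * (N - n) + u ≤ u * (N - m) := by
      calc u * (N - n) + u = u * (N - n + 1) := by ring
      _ ≤ u * (N - m) := Nat.mul_le_mul_left u (by omega)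
    omega

/-- Every function admits some FCIDC. -/
private lemma fcidc_exists {k : ℕ} {S : Type*} (f : (Fin k → Bool) → S) (t : ℕ) :
    ∃ r p, IsFCIDC f t r p := by
  classical
  set N := Fintype.card (Fin k → Bool) with hN
  let e := Fintype.equivFin (Fin k → Bool)
  let n : (Fin k → Bool) → ℕ := fun x => (e x : ℕ)
  have hnlt : ∀ x, n x < N := fun x => (e x).isLt
  have hninj : ∀ x y, x ≠ y → n x ≠ n y := by
    intro x y hxy h
    exact hxy (e.injective (Fin.ext h))
  refine ⟨(t + 1) * N, fun x =>
    List.replicate ((t + 1) * n x) true ++ List.replicate ((t + 1) * (N - n x)) false,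
    ?_, ?_⟩
  · intro x
    simp only [List.length_append, List.length_replicate]
    rw [← Nat.mul_add]
    congr 1
    have := hnlt x
    omega
  · intro x y hf
    have hxy : x ≠ y := fun h => hf (h ▸ rfl)
    have hkey := dID_rep_ge (t + 1) N (n x) (n y) (hnlt x).le (hnlt y).le
      (hninj x y hxy)
    have hlen : (List.ofFn x).length = (List.ofFn y).length := by
      simp
    have := dID_le_dID_append (a := List.ofFn x) (c := List.ofFn y)
      (List.replicate ((t + 1) * n x) true ++ List.replicate ((t + 1) * (N - n x)) false)
      (List.replicate ((t + 1) * n y) true ++ List.replicate ((t + 1) * (N - n y)) false)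
      hlen
    beta_reduce
    omega

end Aux

theorem stmt5 {S : Type*} (k t M : ℕ) (ht : 1 ≤ t) (f : (Fin k → Bool) → S)
    (x : Fin M → Fin k → Bool) (hx : Function.Injective x) :
    N1 (Imat1 f t x) ≤ optRed f t := by
  have hB : {r | ∃ p, IsFCIDC f t r p}.Nonempty := by
    obtain ⟨r, p, hp⟩ := fcidc_exists f t
    exact ⟨r, p, hp⟩
  obtain ⟨p, hplen, hpdist⟩ : ∃ p, IsFCIDC f t (optRed f t) p := Nat.sInf_mem hB
  refine Nat.sInf_le ⟨fun i => p (x i), fun i => hplen (x i), ?_⟩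
  intro i j
  unfold Imat1
  split_ifs with h
  · have hψ := hpdist (x i) (x j) h
    have hsub := dID_append_le (List.ofFn (x i)) (p (x i)) (List.ofFn (x j)) (p (x j))
    -- parity: dID of equal-total-length words is even
    have heven : ∃ m, dID (List.ofFn (x i) ++ p (x i)) (List.ofFn (x j) ++ p (x j))
        = 2 * (k + optRed f t) - 2 * m ∧
        2 * m ≤ 2 * (k + optRed f t) := by
      refine ⟨lcsLen (List.ofFn (x i) ++ p (x i)) (List.ofFn (x j) ++ p (x j)), ?_, ?_⟩
      · simp only [dID, List.length_append, List.length_ofFn, hplen]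
        omega
      · have h1 := lcsLen_le_left (List.ofFn (x i) ++ p (x i))
          (List.ofFn (x j) ++ p (x j))
        have h2 := lcsLen_le_right (List.ofFn (x i) ++ p (x i))
          (List.ofFn (x j) ++ p (x j))
        simp only [List.length_append, List.length_ofFn, hplen] at h1 h2
        omega
    obtain ⟨m, hm1, hm2⟩ := heven
    beta_reduce
    omega
  · exact Nat.zero_le _
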